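/- The total number of symmetric peaks over all Dyck paths of length 2(n+1) equals 1 + Σ_{i=1}^{n} ((i+3)/2)·C_i, where C_i is the i-th Catalan number. -/

import Mathlib

/-- A path (`true` = up step, `false` = down step) never goes below the x-axis. -/
def DyckNonneg (p : List Bool) : Prop :=
  ∀ q : List Bool, q <+: p → q.count false ≤ q.count true

/-- `p` is a Dyck path: never below the x-axis and ends on the x-axis. -/
def IsDyck (p : List Bool) : Prop :=
  DyckNonneg p ∧ p.count true = p.count false

/-- Dyck paths of length `m` together with a distinguished symmetric peak:
a decomposition `A ++ u^a ++ d^a ++ B` with `a ≥ 1`, where the run `u^a` is maximal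
(`A` does not end with an up step) and the run `d^a` is maximal
(`B` does not start with a down step). -/
def SymPeakMarked (m : ℕ) : Type :=
  { q : List Bool × ℕ × List Bool //
      1 ≤ q.2.1 ∧
      q.1.getLast? ≠ some true ∧
      q.2.2.head? ≠ some false ∧
      IsDyck (q.1 ++ List.replicate q.2.1 true ++ List.replicate q.2.1 false ++ q.2.2) ∧
      (q.1 ++ List.replicate q.2.1 true ++ List.replicate q.2.1 false ++ q.2.2).length = m }


open List

namespace SymPeaks

lemma count_add_count (l : List Bool) : l.count true + l.count false = l.length := by
  induction l with
  | nil => simp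
  | cons b t ih => cases b <;> simp [ih, count_cons] <;> omega

lemma dyckNonneg_iff_take (p : List Bool) :
    DyckNonneg p ↔ ∀ n, (p.take n).count false ≤ (p.take n).count true := by
  constructor
  · intro h n; exact h _ (take_prefix n p)
  · intro h q hq
    rw [prefix_iff_eq_take.mp hq]; exact h _

lemma isDyck_iff (p : List Bool) :
    IsDyck p ↔ (∀ n, (p.take n).count false ≤ (p.take n).count true)
      ∧ p.count true = p.count false := by
  unfold IsDyck; rw [dyckNonneg_iff_take]

lemma count_take_append2 (b : Bool) (A B : List Bool) (n : ℕ) :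
    ((A ++ B).take n).count b = (A.take n).count b + (B.take (n - A.length)).count b := by
  simp [take_append, count_append]

lemma count_take_append3 (b : Bool) (A C B : List Bool) (n : ℕ) :
    ((A ++ C ++ B).take n).count b
      = (A.take n).count b + (C.take (n - A.length)).count b
        + (B.take (n - A.length - C.length)).count b := by
  simp [take_append, count_append, Nat.sub_sub]; omega

lemma count_take_le (b : Bool) (l : List Bool) (n : ℕ) : (l.take n).count b ≤ l.count b :=
  (take_sublist n l).count_le b

/-- Master insertion lemma. -/
lemma isDyck_insert_iff {A C B : List Bool} (hC : C.count true = C.count false) :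
    IsDyck (A ++ C ++ B) ↔ (IsDyck (A ++ B) ∧
      ∀ i, A.count false + (C.take i).count false ≤ A.count true + (C.take i).count true) := by
  simp only [isDyck_iff, count_append]
  constructor
  · rintro ⟨h1, h2⟩
    simp only [count_take_append3] at h1
    refine ⟨⟨?_, by omega⟩, ?_⟩
    · intro n
      rw [count_take_append2, count_take_append2]
      rcases le_or_gt n A.length with hn | hn
      · have := h1 n
        have e0 : n - A.length = 0 := by omega
        rw [e0] at this ⊢
        simpa using this
      · have := h1 (n + C.length)
        have e1 : n + C.length - A.length - C.length = n - A.length := by omega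
        have e2 : A.take (n + C.length) = A.take n := by
          rw [take_of_length_le (by omega), take_of_length_le (by omega)]
        have e3 : C.take (n + C.length - A.length) = C := take_of_length_le (by omega)
        rw [e1, e2, e3] at this
        omega
    · intro i
      have := h1 (A.length + i)
      have e2 : A.take (A.length + i) = A := take_of_length_le (by omega)
      have e0 : A.length + i - A.length = i := by omega
      rw [e0, e2] at this
      rcases le_or_gt i C.length with hi | hi
      · have e6 : i - C.length = 0 := by omega
        rw [e6] at this; simpa using this
      · have hAonly := h1 A.length
        have eA : A.take A.length = A := take_of_length_le (le_refl _)
        have eZ : A.length - A.length = 0 := by omega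
        rw [eA, eZ] at hAonly
        simp only [take_zero, count_nil, Nat.zero_sub] at hAonly
        rw [take_of_length_le (by omega)]
        omega
  · rintro ⟨⟨h1, h2⟩, h3⟩
    refine ⟨?_, by omega⟩
    intro n
    rw [count_take_append3, count_take_append3]
    rcases le_or_gt n A.length with hn | hn
    · have := h1 n
      rw [count_take_append2, count_take_append2] at this
      have e0 : n - A.length = 0 := by omega
      rw [e0] at this ⊢
      simpa using this
    · rcases le_or_gt n (A.length + C.length) with hn2 | hn2
      · have := h3 (n - A.length)
        have e0 : n - A.length - C.length = 0 := by omega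
        have hA : (A.take n) = A := take_of_length_le (by omega)
        rw [e0, hA]
        simpa using this
      · have := h1 (n - C.length)
        rw [count_take_append2, count_take_append2] at this
        have hA : A.take n = A := take_of_length_le (by omega)
        have hA2 : A.take (n - C.length) = A := take_of_length_le (by omega)
        have hC2 : C.take (n - A.length) = C := take_of_length_le (by omega)
        have e1 : n - C.length - A.length = n - A.length - C.length := by omega
        rw [hA2, e1] at this
        rw [hA, hC2]
        omega

lemma isDyck_nil : IsDyck [] := by constructor <;> simp [DyckNonneg]

lemma prefix_count_le {A B : List Bool} (h : IsDyck (A ++ B)) :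
    A.count false ≤ A.count true := by
  rw [isDyck_iff] at h
  have := h.1 A.length
  rw [count_take_append2, count_take_append2] at this
  simpa using this

lemma length_even {p : List Bool} (h : IsDyck p) : p.length = 2 * p.count true := by
  have := count_add_count p
  have := h.2
  omega

/-- peak insertion -/
lemma isDyck_peak_iff (A B : List Bool) :
    IsDyck (A ++ [true, false] ++ B) ↔ IsDyck (A ++ B) := by
  rw [isDyck_insert_iff (by simp)]
  constructor
  · exact fun h => h.1
  · intro h
    refine ⟨h, fun i => ?_⟩
    have hA := prefix_count_le h
    match i with
    | 0 => simpa using hA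
    | 1 => simp [count_cons]; omega
    | (n+2) =>
      rw [take_of_length_le (by simp)]
      simp [count_cons]; omega

/-- mountain insertion -/
lemma isDyck_mountain_iff (A B : List Bool) (a : ℕ) :
    IsDyck (A ++ (List.replicate a true ++ List.replicate a false) ++ B) ↔ IsDyck (A ++ B) := by
  rw [isDyck_insert_iff (by simp [count_replicate])]
  constructor
  · exact fun h => h.1
  · intro h
    refine ⟨h, fun i => ?_⟩
    have hA := prefix_count_le h
    simp only [count_take_append2, take_replicate, count_replicate, length_replicate]
    simp
    omega

/-- valley insertion -/
lemma isDyck_valley_iff (A B : List Bool) :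
    IsDyck (A ++ [false, true] ++ B) ↔
      (IsDyck (A ++ B) ∧ A.count false + 1 ≤ A.count true) := by
  rw [isDyck_insert_iff (by simp)]
  constructor
  · rintro ⟨h1, h2⟩
    refine ⟨h1, ?_⟩
    have := h2 1
    simpa [count_cons] using this
  · rintro ⟨h1, h2⟩
    refine ⟨h1, fun i => ?_⟩
    match i with
    | 0 => simp; omega
    | 1 => simp [count_cons]; omega
    | (n+2) =>
      rw [take_of_length_le (by simp)]
      simp [count_cons]; omega

/-- splitting a Dyck word at a balanced point -/
lemma isDyck_split {A B : List Bool} (h : IsDyck (A ++ B))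
    (hA : A.count true = A.count false) : IsDyck A ∧ IsDyck B := by
  rw [isDyck_iff] at h ⊢
  rw [isDyck_iff]
  obtain ⟨h1, h2⟩ := h
  simp only [count_append] at h2
  refine ⟨⟨fun n => ?_, hA⟩, ⟨fun n => ?_, by omega⟩⟩
  · have := h1 (min n A.length)
    rw [count_take_append2, count_take_append2] at this
    have e0 : min n A.length - A.length = 0 := by omega
    rw [e0] at this
    have : (A.take n).count false ≤ (A.take n).count true := by
      rcases le_or_gt n A.length with hn | hn
      · simpa [min_eq_left hn] using this
      · rw [take_of_length_le (by omega)]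
        omega
    exact this
  · have := h1 (A.length + n)
    rw [count_take_append2, count_take_append2] at this
    have e0 : A.length + n - A.length = n := by omega
    rw [e0, take_of_length_le (show A.length ≤ A.length + n by omega)] at this
    omega

lemma head_true {p : List Bool} (h : IsDyck p) (hp : p ≠ []) :
    ∃ r, p = true :: r := by
  cases p with
  | nil => simp at hp
  | cons b r =>
    cases b with
    | true => exact ⟨r, rfl⟩
    | false =>
      exfalso
      rw [isDyck_iff] at h
      have := h.1 1
      simp [count_cons] at this

lemma getLast_false {p : List Bool} (h : IsDyck p) (hp : p ≠ []) :
    ∃ r, p = r ++ [false] := by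
  rcases eq_nil_or_concat p with rfl | ⟨r, b, rfl⟩
  · simp at hp
  · rw [concat_eq_append] at h ⊢
    cases b with
    | false => exact ⟨r, rfl⟩
    | true =>
      exfalso
      have h2 := h.2
      have hpre : r.count false ≤ r.count true := prefix_count_le (B := [true]) h
      simp [count_append, count_cons] at h2
      omega

/-- concatenation of Dyck words -/
lemma isDyck_append {A B : List Bool} (hA : IsDyck A) (hB : IsDyck B) :
    IsDyck (A ++ B) := by
  rw [isDyck_iff] at hA hB ⊢
  refine ⟨fun n => ?_, by simp [count_append]; omega⟩
  rw [count_take_append2, count_take_append2]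
  have := hA.1 n
  have := hB.1 (n - A.length)
  omega

lemma isDyck_ud : IsDyck [true, false] := by
  have := (isDyck_peak_iff [] []).mpr isDyck_nil
  simpa using this

lemma isDyck_nest {M : List Bool} (hM : IsDyck M) : IsDyck ([true] ++ M ++ [false]) := by
  rw [isDyck_insert_iff hM.2]
  refine ⟨by simpa using isDyck_ud, fun i => ?_⟩
  rw [isDyck_iff] at hM
  have := hM.1 i
  simp [count_cons]
  omega

/-- building a word by first-return decomposition -/
lemma isDyck_fr {M N : List Bool} (hM : IsDyck M) (hN : IsDyck N) :
    IsDyck (true :: M ++ false :: N) := by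
  have := isDyck_append (isDyck_nest hM) hN
  simpa using this

lemma first_return_lt {M M' N N' : List Bool} (hM : IsDyck M) (hM' : IsDyck M')
    (h : M ++ false :: N = M' ++ false :: N') (hlt : M.length < M'.length) : False := by
  have htake : (M ++ false :: N).take (M.length + 1) = (M' ++ false :: N').take (M.length + 1) := by
    rw [h]
  rw [take_append, take_append] at htake
  have e1 : M.take (M.length + 1) = M := take_of_length_le (by omega)
  have e2 : M.length + 1 - M.length = 1 := by omega
  rw [e1, e2] at htake
  have e3 : (false :: N).take 1 = [false] := by simp
  rw [e3] at htake
  -- htake : M ++ [false] = M'.take (M.length+1) ++ (false::N').take (M.length+1-M'.length)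
  have e4 : M.length + 1 - M'.length = 0 := by omega
  rw [e4] at htake
  simp only [take_zero, append_nil] at htake
  rw [isDyck_iff] at hM'
  have hx := hM'.1 (M.length + 1)
  rw [← htake] at hx
  simp [count_append, count_cons] at hx
  have hy := hM.2
  omega

lemma first_return_unique {M M' N N' : List Bool} (hM : IsDyck M) (hM' : IsDyck M')
    (h : M ++ false :: N = M' ++ false :: N') : M = M' ∧ N = N' := by
  rcases lt_trichotomy M.length M'.length with hl | hl | hl
  · exact absurd (first_return_lt hM hM' h hl) (by simp)
  · have := append_inj h (by omega)
    obtain ⟨h1, h2⟩ := this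
    exact ⟨h1, by injection h2⟩
  · exact absurd (first_return_lt hM' hM h.symm hl) (by simp)

lemma exists_fr {p : List Bool} (h : IsDyck p) (hp : p ≠ []) :
    ∃ M N, IsDyck M ∧ IsDyck N ∧ p = true :: M ++ false :: N := by
  classical
  obtain ⟨r, rfl⟩ := head_true h hp
  rw [isDyck_iff] at h
  obtain ⟨h1, h2⟩ := h
  have h2' : r.count false = r.count true + 1 := by
    simp [count_cons] at h2; omega
  have hQ : ∃ i, (r.take i).count true < (r.take i).count false :=
    ⟨r.length, by rw [take_of_length_le (le_refl _)]; omega⟩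
  set i0 := Nat.find hQ with hi0def
  have hQ0 : (r.take i0).count true < (r.take i0).count false := Nat.find_spec hQ
  have hmin : ∀ j, j < i0 → (r.take j).count false ≤ (r.take j).count true := by
    intro j hj
    have := Nat.find_min hQ hj
    omega
  have hi0pos : 0 < i0 := by
    rcases Nat.eq_zero_or_pos i0 with hz | hz
    · rw [hz] at hQ0; simp at hQ0
    · exact hz
  have hi0le : i0 ≤ r.length := Nat.find_min' hQ (by rw [take_of_length_le (le_refl _)]; omega)
  have hlt : i0 - 1 < r.length := by omega
  clear_value i0
  have hsucc : r.take i0 = r.take (i0 - 1) ++ [r[i0 - 1]] := by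
    conv_lhs => rw [show i0 = (i0 - 1) + 1 by omega]
    rw [take_succ, getElem?_eq_getElem hlt]
    rfl
  have hprev := hmin (i0 - 1) (by omega)
  have hx : r[i0 - 1] = false := by
    by_contra hxc
    have hxt : r[i0 - 1] = true := by
      cases hb : r[i0 - 1] <;> simp_all
    rw [hsucc, hxt] at hQ0
    simp [count_append, count_cons] at hQ0
    omega
  have hbal : (r.take (i0 - 1)).count true = (r.take (i0 - 1)).count false := by
    rw [hsucc, hx] at hQ0
    simp [count_append, count_cons] at hQ0
    omega
  set M := r.take (i0 - 1) with hMdef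
  set N := r.drop i0 with hNdef
  clear_value M N
  have hMlen : M.length = i0 - 1 := by
    rw [hMdef, length_take]; omega
  have hrM : r = M ++ false :: N := by
    rw [hMdef, hNdef]
    conv_lhs => rw [← take_append_drop (i0 - 1) r]
    congr 1
    rw [drop_eq_getElem_cons hlt, hx, show i0 - 1 + 1 = i0 by omega]
  have hMDyck : IsDyck M := by
    rw [isDyck_iff]
    refine ⟨fun n => ?_, hbal⟩
    rw [hMdef, take_take]
    rcases le_or_gt (i0 - 1) n with hn | hn
    · rw [min_eq_right hn, ← hMdef]
      omega
    · rw [min_eq_left (le_of_lt hn)]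
      exact hmin n (by omega)

  have hNDyck : IsDyck N := by
    rw [isDyck_iff]
    have hcnt : ∀ b, r.count b = M.count b + (false :: N).count b := by
      intro b; rw [hrM, count_append]
    have hct := hcnt true
    have hcf := hcnt false
    simp [count_cons] at hct hcf
    constructor
    · intro m
      have := h1 (1 + i0 + m)
      have hform : (true :: r) = [true] ++ (M ++ [false]) ++ N := by
        rw [hrM]; simp
      rw [hform, count_take_append3, count_take_append3] at this
      have e1 : ([true] : List Bool).take (1 + i0 + m) = [true] := take_of_length_le (by simp; omega)
      have e2 : (M ++ [false]).take (1 + i0 + m - ([true] : List Bool).length) = M ++ [false] := by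
        apply take_of_length_le
        simp [hMlen]
        omega
      have e3 : 1 + i0 + m - ([true] : List Bool).length - (M ++ [false]).length = m := by
        simp [hMlen]; omega
      rw [e1, e2, e3] at this
      simp [count_append, count_cons] at this
      omega
    · omega
  exact ⟨M, N, hMDyck, hNDyck, by rw [hrM]; simp⟩

abbrev DWT (m : ℕ) : Type := {p : List Bool // IsDyck p ∧ p.length = 2 * m}
abbrev PeakT (m : ℕ) : Type :=
  {q : List Bool × List Bool // IsDyck (q.1 ++ [true, false] ++ q.2) ∧
    q.1.length + q.2.length + 2 = 2 * m}
def ValT (m : ℕ) : Type :=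
  {q : List Bool × List Bool // IsDyck (q.1 ++ [false, true] ++ q.2) ∧
    q.1.length + q.2.length + 2 = 2 * m}
def HillT (m : ℕ) : Type :=
  {q : List Bool × List Bool // (IsDyck (q.1 ++ [true, false] ++ q.2) ∧
    q.1.length + q.2.length + 2 = 2 * m) ∧ q.1.count true = q.1.count false}
def SplitT (m : ℕ) : Type :=
  {q : List Bool × List Bool // q.1.getLast? ≠ some true ∧ q.2.head? ≠ some false ∧
    IsDyck (q.1 ++ q.2) ∧ q.1.length + q.2.length = 2 * m}
def PairT (m : ℕ) : Type :=
  {q : List Bool × List Bool // IsDyck q.1 ∧ IsDyck q.2 ∧ q.1.length + q.2.length = 2 * m}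

lemma finite_single {P : List Bool → Prop} (N : ℕ) (h : ∀ q, P q → q.length ≤ N) :
    Finite {q // P q} := by
  have hs : {q : List Bool | P q}.Finite :=
    Set.Finite.subset (List.finite_length_le Bool N) fun q hq => h q hq
  exact hs.to_subtype

lemma finite_pair {P : List Bool × List Bool → Prop} (N : ℕ)
    (h : ∀ q, P q → q.1.length ≤ N ∧ q.2.length ≤ N) : Finite {q // P q} := by
  have hs : {q : List Bool × List Bool | P q}.Finite := by
    apply Set.Finite.subset
      (Set.Finite.prod (List.finite_length_le Bool N) (List.finite_length_le Bool N))
    intro q hq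
    exact ⟨(h q hq).1, (h q hq).2⟩
  exact hs.to_subtype

instance (m : ℕ) : Finite (DWT m) :=
  finite_single (2 * m) (fun q hq => by omega)
instance (m : ℕ) : Finite (PeakT m) :=
  finite_pair (2 * m) (fun q hq => by omega)
instance (m : ℕ) : Finite (ValT m) :=
  finite_pair (2 * m) (fun q hq => by omega)
instance (m : ℕ) : Finite (HillT m) :=
  finite_pair (2 * m) (fun q hq => by constructor <;> omega)
instance (m : ℕ) : Finite (SplitT m) :=
  finite_pair (2 * m) (fun q hq => by constructor <;> omega)
instance (m : ℕ) : Finite (PairT m) :=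
  finite_pair (2 * m) (fun q hq => by constructor <;> omega)

def boolToStep (b : Bool) : DyckStep := bif b then DyckStep.U else DyckStep.D
def stepToBool (s : DyckStep) : Bool := match s with | DyckStep.U => true | DyckStep.D => false

lemma boolToStep_inj : Function.Injective boolToStep := by
  intro a b h; cases a <;> cases b <;> simp [boolToStep] at h ⊢

lemma stepToBool_inj : Function.Injective stepToBool := by
  intro a b h; cases a <;> cases b <;> simp [stepToBool] at h ⊢

lemma count_step (l : List Bool) :
    (l.map boolToStep).count DyckStep.U = l.count true ∧
    (l.map boolToStep).count DyckStep.D = l.count false := by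
  constructor
  · exact count_map_of_injective l boolToStep boolToStep_inj true
  · exact count_map_of_injective l boolToStep boolToStep_inj false

lemma count_bool (w : List DyckStep) :
    (w.map stepToBool).count true = w.count DyckStep.U ∧
    (w.map stepToBool).count false = w.count DyckStep.D := by
  constructor
  · exact count_map_of_injective w stepToBool stepToBool_inj DyckStep.U
  · exact count_map_of_injective w stepToBool stepToBool_inj DyckStep.D

lemma count_add_count_step (w : List DyckStep) :
    w.count DyckStep.U + w.count DyckStep.D = w.length := by
  induction w with
  | nil => simp
  | cons s t ih => cases s <;> simp [count_cons] <;> omega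

noncomputable def dwtEquiv (m : ℕ) : DWT m ≃ {p : DyckWord // p.semilength = m} where
  toFun := fun ⟨l, hd, hl⟩ =>
    ⟨⟨l.map boolToStep, by
        rw [(count_step l).1, (count_step l).2]; exact hd.2, by
        intro i
        rw [← map_take, (count_step (l.take i)).1, (count_step (l.take i)).2]
        exact ((isDyck_iff l).mp hd).1 i⟩, by
      show (l.map boolToStep).count DyckStep.U = m
      rw [(count_step l).1]
      have := length_even hd
      omega⟩
  invFun := fun ⟨⟨w, hw1, hw2⟩, hs⟩ =>
    ⟨w.map stepToBool, ⟨by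
      rw [isDyck_iff]
      constructor
      · intro n
        rw [← map_take, (count_bool (w.take n)).1, (count_bool (w.take n)).2]
        exact hw2 n
      · rw [(count_bool w).1, (count_bool w).2]; exact hw1, by
      have h3 := count_add_count_step w
      have : w.count DyckStep.U = m := hs
      simp only [length_map]
      omega⟩⟩
  left_inv := by
    rintro ⟨l, hd, hl⟩
    apply Subtype.ext
    show (l.map boolToStep).map stepToBool = l
    rw [map_map]
    have : stepToBool ∘ boolToStep = id := by funext b; cases b <;> rfl
    rw [this, map_id]
  right_inv := by
    rintro ⟨⟨w, hw1, hw2⟩, hs⟩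
    apply Subtype.ext
    apply DyckWord.ext
    show (w.map stepToBool).map boolToStep = w
    rw [map_map]
    have : boolToStep ∘ stepToBool = id := by funext s; cases s <;> rfl
    rw [this, map_id]

lemma card_DWT (m : ℕ) : Nat.card (DWT m) = catalan m := by
  rw [Nat.card_congr (dwtEquiv m), Nat.card_eq_fintype_card,
    DyckWord.card_dyckWord_semilength_eq_catalan]

lemma isDyck_mountain_iff' (A B : List Bool) (a : ℕ) :
    IsDyck (A ++ List.replicate a true ++ List.replicate a false ++ B) ↔ IsDyck (A ++ B) := by
  rw [show A ++ List.replicate a true ++ List.replicate a false ++ B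
      = A ++ (List.replicate a true ++ List.replicate a false) ++ B by simp [append_assoc],
    isDyck_mountain_iff]

/-- B1: `PairT r ≃ DWT (r+1)` via first-return decomposition. -/
lemma card_PairT (r : ℕ) : Nat.card (PairT r) = catalan (r + 1) := by
  rw [← card_DWT (r + 1)]
  apply Nat.card_eq_of_bijective
    (fun q => (⟨true :: q.1.1 ++ false :: q.1.2, isDyck_fr q.2.1 q.2.2.1, by
      have := q.2.2.2
      simp only [length_append, length_cons]
      omega⟩ : DWT (r + 1)))
  constructor
  · intro q q' h
    have h' : true :: q.1.1 ++ false :: q.1.2 = true :: q'.1.1 ++ false :: q'.1.2 :=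
      congrArg Subtype.val h
    simp only [cons_append, List.cons.injEq] at h'
    obtain ⟨h1, h2⟩ := first_return_unique q.2.1 q'.2.1 h'.2
    apply Subtype.ext
    exact Prod.ext h1 h2
  · rintro ⟨p, hp, hl⟩
    have hne : p ≠ [] := by
      intro h; rw [h] at hl; simp at hl
    obtain ⟨M, N, hM, hN, rfl⟩ := exists_fr hp hne
    refine ⟨⟨(M, N), hM, hN, ?_⟩, rfl⟩
    show M.length + N.length = 2 * r
    simp only [length_append, length_cons] at hl
    omega

/-- B2: `HillT (m+1) ≃ PairT m`. -/
lemma card_HillT (m : ℕ) : Nat.card (HillT (m + 1)) = catalan (m + 1) := by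
  rw [← card_PairT m]
  apply Nat.card_eq_of_bijective (fun q : HillT (m+1) => (⟨q.1, by
    obtain ⟨⟨hd, hl⟩, hbal⟩ := q.2
    have hd' : IsDyck (q.1.1 ++ ([true, false] ++ q.1.2)) := by
      rw [← append_assoc]; exact hd
    obtain ⟨hA, hRest⟩ := isDyck_split hd' hbal
    have hB : IsDyck q.1.2 := by
      have := (isDyck_peak_iff [] q.1.2).mp (by simpa using hRest)
      simpa using this
    exact ⟨hA, hB, by omega⟩⟩ : PairT m))
  constructor
  · intro q q' hEq
    have h2 := congrArg Subtype.val hEq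
    exact Subtype.ext h2
  · rintro ⟨⟨M, N⟩, hM, hN, hl⟩
    refine ⟨⟨(M, N), ⟨⟨?_, ?_⟩, hM.2⟩⟩, rfl⟩
    · rw [isDyck_peak_iff]
      exact isDyck_append hM hN
    · show M.length + N.length + 2 = 2 * (m + 1)
      simp only at hl
      omega

/-- B3: `PeakT m ≃ ValT m ⊕ HillT m`. -/
lemma card_PeakT_eq (m : ℕ) :
    Nat.card (PeakT m) = Nat.card (ValT m) + Nat.card (HillT m) := by
  rw [← Nat.card_sum]
  refine (Nat.card_eq_of_bijective (Sum.elim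
    (fun q : ValT m => (⟨q.1, by
        obtain ⟨h1, h2⟩ := (isDyck_valley_iff q.1.1 q.1.2).mp q.2.1
        exact ⟨(isDyck_peak_iff q.1.1 q.1.2).mpr h1, q.2.2⟩⟩ : PeakT m))
    (fun q : HillT m => (⟨q.1, q.2.1⟩ : PeakT m))) ⟨?_, ?_⟩).symm
  · rintro (q | q) (q' | q') hEq <;>
      simp only [Sum.elim_inl, Sum.elim_inr, Subtype.mk.injEq] at hEq
    · exact congrArg Sum.inl (Subtype.ext hEq)
    · exfalso
      obtain ⟨hh, hcnt⟩ := (isDyck_valley_iff q.1.1 q.1.2).mp q.2.1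
      have hbal := q'.2.2
      rw [hEq] at hcnt
      omega
    · exfalso
      obtain ⟨hh, hcnt⟩ := (isDyck_valley_iff q'.1.1 q'.1.2).mp q'.2.1
      have hbal := q.2.2
      rw [← hEq] at hcnt
      omega
    · exact congrArg Sum.inr (Subtype.ext hEq)
  · rintro ⟨⟨A, B⟩, hd, hl⟩
    rcases eq_or_ne (A.count true) (A.count false) with hbal | hbal
    · exact ⟨Sum.inr ⟨(A, B), ⟨hd, hl⟩, hbal⟩, rfl⟩
    · have h1 : IsDyck (A ++ B) := (isDyck_peak_iff A B).mp hd
      have h2 : A.count false ≤ A.count true := prefix_count_le (B := [true, false] ++ B) (by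
        rw [← append_assoc]; exact hd)
      exact ⟨Sum.inl ⟨(A, B), (isDyck_valley_iff A B).mpr ⟨h1, by omega⟩, hl⟩, rfl⟩

lemma dwt_ne_nil {m : ℕ} (q : DWT (m + 1)) : q.1 ≠ [] := by
  intro h
  have := q.2.2
  rw [h] at this
  simp at this

/-- B4: split classification. -/
lemma card_SplitT (m : ℕ) :
    Nat.card (SplitT (m + 1)) = 2 * catalan (m + 1) + Nat.card (ValT (m + 1)) := by
  have key : Nat.card (DWT (m+1) ⊕ DWT (m+1) ⊕ ValT (m+1)) = Nat.card (SplitT (m + 1)) := by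
    apply Nat.card_eq_of_bijective (Sum.elim
      (fun q : DWT (m+1) => (⟨([], q.1), by simp, by
          obtain ⟨r, hr⟩ := head_true q.2.1 (dwt_ne_nil q)
          rw [hr]; simp, by simpa using q.2.1, by simpa using q.2.2⟩ : SplitT (m+1)))
      (Sum.elim
        (fun q : DWT (m+1) => (⟨(q.1, []), by
            obtain ⟨r, hr⟩ := getLast_false q.2.1 (dwt_ne_nil q)
            rw [hr]; simp, by simp, by simpa using q.2.1, by simpa using q.2.2⟩ : SplitT (m+1)))
        (fun q : ValT (m+1) => (⟨(q.1.1 ++ [false], true :: q.1.2), by simp, by simp, by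
            rw [show (q.1.1 ++ [false]) ++ (true :: q.1.2) = q.1.1 ++ [false, true] ++ q.1.2 by simp]
            exact q.2.1, by
            have := q.2.2
            simp only [length_append, length_cons, length_singleton, length_nil]
            omega⟩ : SplitT (m+1)))))
    constructor
    · rintro (q | q | q) (q' | q' | q') hEq <;>
        simp only [Sum.elim_inl, Sum.elim_inr, Subtype.mk.injEq, Prod.mk.injEq] at hEq
      · exact congrArg Sum.inl (Subtype.ext hEq.2)
      · exact absurd hEq.1.symm (dwt_ne_nil q')
      · exfalso
        have : q'.1.1 ++ [false] ≠ [] := by simp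
        exact this hEq.1.symm
      · exact absurd hEq.1 (dwt_ne_nil q)
      · exact congrArg (Sum.inr ∘ Sum.inl) (Subtype.ext hEq.1)
      · exact absurd hEq.2.symm (cons_ne_nil true q'.1.2)
      · exfalso
        have : q.1.1 ++ [false] ≠ [] := by simp
        exact this hEq.1
      · exact absurd hEq.2 (cons_ne_nil true q.1.2)
      · have h1 : q.1.1 = q'.1.1 := append_cancel_right hEq.1
        have h2 : q.1.2 = q'.1.2 := by
          have := hEq.2
          injection this
        refine congrArg (Sum.inr ∘ Sum.inr) (Subtype.ext ?_)
        exact Prod.ext h1 h2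
    · rintro ⟨⟨A, B⟩, hA, hB, hd, hl⟩
      dsimp only at hA hB hd hl
      rcases eq_or_ne A [] with rfl | hAne
      · refine ⟨Sum.inl ⟨B, by simpa using hd, by simpa using hl⟩, ?_⟩
        apply Subtype.ext
        simp [Sum.elim_inl]
      rcases eq_or_ne B [] with rfl | hBne
      · refine ⟨Sum.inr (Sum.inl ⟨A, by simpa using hd, by simpa using hl⟩), ?_⟩
        apply Subtype.ext
        simp [Sum.elim_inr]
      · have hAlast : A.getLast (by exact hAne) = false := by
          rcases hl2 : A.getLast (by exact hAne) with _ | _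
          · rfl
          · exfalso
            apply hA
            rw [getLast?_eq_getLast hAne, hl2]
        have hAeq : A = A.dropLast ++ [false] := by
          conv_lhs => rw [← dropLast_append_getLast hAne]
          rw [hAlast]
        have hBhead : B.head (by exact hBne) = true := by
          rcases hl2 : B.head (by exact hBne) with _ | _
          · exfalso
            apply hB
            rw [head?_eq_head hBne, hl2]
          · rfl
        have hBeq : B = true :: B.tail := by
          conv_lhs => rw [← cons_head_tail hBne]
          rw [hBhead]
        refine ⟨Sum.inr (Sum.inr ⟨(A.dropLast, B.tail), ?_, ?_⟩), ?_⟩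
        · rw [show A.dropLast ++ [false, true] ++ B.tail
              = (A.dropLast ++ [false]) ++ (true :: B.tail) by simp]
          rw [← hAeq, ← hBeq]
          exact hd
        · have lA : A.dropLast.length + 1 = A.length := by
            conv_rhs => rw [hAeq]
            simp
          have lB : B.tail.length + 1 = B.length := by
            conv_rhs => rw [hBeq]
            simp
          show A.dropLast.length + B.tail.length + 2 = 2 * (m + 1)
          omega
        · apply Subtype.ext
          simp only [Sum.elim_inr]
          exact Prod.ext (by show A.dropLast ++ [false] = A; rw [← hAeq]) (by show true :: B.tail = B; rw [← hBeq])
  rw [Nat.card_sum, Nat.card_sum, card_DWT] at key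
  omega

/-- B5: recursion for marked symmetric peaks. -/
lemma finite_triple {P : List Bool × ℕ × List Bool → Prop} (N : ℕ)
    (h : ∀ q, P q → q.1.length ≤ N ∧ q.2.1 ≤ N ∧ q.2.2.length ≤ N) : Finite {q // P q} := by
  have hs : {q : List Bool × ℕ × List Bool | P q}.Finite := by
    apply Set.Finite.subset ((List.finite_length_le Bool N).prod
      ((Set.finite_Iic N).prod (List.finite_length_le Bool N)))
    intro q hq
    exact ⟨(h q hq).1, (h q hq).2.1, (h q hq).2.2⟩
  exact hs.to_subtype

instance instFinSPM (m : ℕ) : Finite (SymPeakMarked m) := by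
  apply finite_triple m
  rintro ⟨A, a, B⟩ ⟨h1, h2, h3, h4, h5⟩
  simp only [length_append, length_replicate] at h5
  refine ⟨by dsimp only; omega, by dsimp only; omega, by dsimp only; omega⟩

lemma card_SPM_succ (m : ℕ) :
    Nat.card (SymPeakMarked (2 * (m + 2)))
      = Nat.card (SymPeakMarked (2 * (m + 1))) + Nat.card (SplitT (m + 1)) := by
  rw [← Nat.card_sum]
  refine (Nat.card_eq_of_bijective (Sum.elim
    (fun q : SymPeakMarked (2 * (m + 1)) =>
      (⟨(q.1.1, q.1.2.1 + 1, q.1.2.2), by exact Nat.succ_le_succ (Nat.zero_le _), q.2.2.1, q.2.2.2.1, by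
        rw [isDyck_mountain_iff']
        exact (isDyck_mountain_iff' _ _ _).mp q.2.2.2.2.1, by
        have := q.2.2.2.2.2
        simp only [length_append, length_replicate] at this
        show (q.1.1 ++ List.replicate (q.1.2.1 + 1) true ++ List.replicate (q.1.2.1 + 1) false
          ++ q.1.2.2).length = 2 * (m + 2)
        simp only [length_append, length_replicate]
        omega⟩ : SymPeakMarked (2 * (m + 2))))
    (fun q : SplitT (m + 1) =>
      (⟨(q.1.1, 1, q.1.2), le_refl 1, q.2.1, q.2.2.1, by
        rw [isDyck_mountain_iff']
        exact q.2.2.2.1, by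
        have := q.2.2.2.2
        show (q.1.1 ++ List.replicate 1 true ++ List.replicate 1 false
          ++ q.1.2).length = 2 * (m + 2)
        simp only [length_append, length_replicate]
        omega⟩ : SymPeakMarked (2 * (m + 2))))) ⟨?_, ?_⟩).symm
  · rintro (q | q) (q' | q') hEq <;>
      simp only [Sum.elim_inl, Sum.elim_inr, Subtype.mk.injEq, Prod.mk.injEq] at hEq
    · refine congrArg Sum.inl (Subtype.ext ?_)
      obtain ⟨e1, e2, e3⟩ := hEq
      exact Prod.ext e1 (Prod.ext (by omega) e3)
    · exfalso
      have := q.2.1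
      omega
    · exfalso
      have := q'.2.1
      omega
    · refine congrArg Sum.inr (Subtype.ext ?_)
      obtain ⟨e1, e2, e3⟩ := hEq
      exact Prod.ext e1 e3
  · rintro ⟨⟨A, a, B⟩, h1, h2, h3, h4, h5⟩
    dsimp only at h1 h2 h3 h4 h5
    rcases eq_or_lt_of_le h1 with ha1 | ha2
    · refine ⟨Sum.inr ⟨(A, B), h2, h3, ?_, ?_⟩, ?_⟩
      · rw [← isDyck_mountain_iff' A B a]
        exact h4
      · show A.length + B.length = 2 * (m + 1)
        simp only [length_append, length_replicate] at h5
        omega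
      · apply Subtype.ext
        simp only [Sum.elim_inr]
        exact Prod.ext rfl (Prod.ext (by show 1 = a; omega) rfl)
    · refine ⟨Sum.inl ⟨(A, a - 1, B), by dsimp only; omega, h2, h3, ?_, ?_⟩, ?_⟩
      · rw [isDyck_mountain_iff']
        exact (isDyck_mountain_iff' _ _ _).mp h4
      · show (A ++ List.replicate (a-1) true ++ List.replicate (a-1) false ++ B).length
          = 2 * (m + 1)
        simp only [length_append, length_replicate] at h5 ⊢
        omega
      · apply Subtype.ext
        simp only [Sum.elim_inl]
        exact Prod.ext rfl (Prod.ext (by show a - 1 + 1 = a; omega) rfl)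

/-- B6: base case. -/
lemma card_SPM_one : Nat.card (SymPeakMarked (2 * 1)) = 1 := by
  have : Nonempty (SymPeakMarked 2) := ⟨⟨([], 1, []), le_refl 1, by simp, by simp, by
    simpa using (isDyck_mountain_iff' [] [] 1).mpr isDyck_nil, by simp⟩⟩
  rw [show 2 * 1 = 2 by norm_num]
  rw [Nat.card_eq_one_iff_unique]
  refine ⟨⟨?_⟩, this⟩
  rintro ⟨⟨A, a, B⟩, h1, h2, h3, h4, h5⟩ ⟨⟨A', a', B'⟩, h1', h2', h3', h4', h5'⟩
  dsimp only at h1 h5 h1' h5'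
  simp only [length_append, length_replicate] at h5 h5'
  apply Subtype.ext
  have hA : A = [] := by
    apply List.eq_nil_of_length_eq_zero
    omega
  have hB : B = [] := by
    apply List.eq_nil_of_length_eq_zero
    omega
  have hA' : A' = [] := by
    apply List.eq_nil_of_length_eq_zero
    omega
  have hB' : B' = [] := by
    apply List.eq_nil_of_length_eq_zero
    omega
  simp only [hA, hB, hA', hB']
  refine Prod.ext rfl (Prod.ext ?_ rfl)
  dsimp only
  omega

/-- The recursion type. -/
def RecT (k : ℕ) : Type :=
  DWT k ⊕ (Σ i : Fin (k + 1), (PeakT i × DWT (k - i)) ⊕ (DWT i × PeakT (k - i)))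

noncomputable instance (k : ℕ) : Fintype (RecT k) := by
  unfold RecT
  have : ∀ m, Fintype (DWT m) := fun m => Fintype.ofFinite _
  have : ∀ m, Fintype (PeakT m) := fun m => Fintype.ofFinite _
  infer_instance

/-- The recursion map. -/
noncomputable def recMap (k : ℕ) : RecT k → PeakT (k + 1) :=
  Sum.elim
    (fun N => ⟨([], N.1), by
        rw [show ([] : List Bool) ++ [true, false] ++ N.1 = [] ++ [true, false] ++ N.1 from rfl]
        rw [isDyck_peak_iff]
        simpa using N.2.1, by
        have := N.2.2
        show ([] : List Bool).length + N.1.length + 2 = 2 * (k + 1)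
        simp only [length_nil]
        omega⟩)
    (fun x => match x with
      | ⟨i, Sum.inl (pk, N)⟩ => ⟨(true :: pk.1.1, pk.1.2 ++ false :: N.1), by
          have h := isDyck_fr pk.2.1 N.2.1
          rw [show (true :: (pk.1.1 ++ [true, false] ++ pk.1.2)) ++ false :: N.1
            = (true :: pk.1.1) ++ [true, false] ++ (pk.1.2 ++ false :: N.1) by simp] at h
          exact h, by
          have h1 := pk.2.2
          have h2 := N.2.2
          have h3 : (i : ℕ) ≤ k := Nat.lt_succ_iff.mp i.isLt
          show (true :: pk.1.1).length + (pk.1.2 ++ false :: N.1).length + 2 = 2 * (k + 1)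
          simp only [length_cons, length_append]
          omega⟩
      | ⟨i, Sum.inr (M, pk)⟩ => ⟨(true :: M.1 ++ false :: pk.1.1, pk.1.2), by
          have h := isDyck_fr M.2.1 pk.2.1
          rw [show (true :: M.1) ++ false :: (pk.1.1 ++ [true, false] ++ pk.1.2)
            = (true :: M.1 ++ false :: pk.1.1) ++ [true, false] ++ pk.1.2 by simp] at h
          exact h, by
          have h1 := pk.2.2
          have h2 := M.2.2
          have h3 : (i : ℕ) ≤ k := Nat.lt_succ_iff.mp i.isLt
          show (true :: M.1 ++ false :: pk.1.1).length + pk.1.2.length + 2 = 2 * (k + 1)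
          simp only [length_cons, length_append]
          omega⟩)

lemma recMap_bij (k : ℕ) : Function.Bijective (recMap k) := by
  constructor
  · rintro (N | ⟨i, (⟨pk, N⟩ | ⟨M, pk⟩)⟩) (N' | ⟨i', (⟨pk', N'⟩ | ⟨M', pk'⟩)⟩) hEq <;>
      have h1 := congrArg (fun z => (Subtype.val z).1) hEq <;>
      have h2 := congrArg (fun z => (Subtype.val z).2) hEq <;>
      simp only [recMap, Sum.elim_inl, Sum.elim_inr] at h1 h2
    -- (1,1)
    · exact congrArg Sum.inl (Subtype.ext h2)
    -- (1,2)
    · exact absurd h1 (by simp)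
    -- (1,3)
    · exact absurd h1 (by simp)
    -- (2,1)
    · exact absurd h1 (by simp)
    -- (2,2)
    · have hA : pk.1.1 = pk'.1.1 := by
        simpa using h1
      have hw : (pk.1.1 ++ [true, false] ++ pk.1.2) ++ false :: N.1
          = (pk'.1.1 ++ [true, false] ++ pk'.1.2) ++ false :: N'.1 := by
        simp only [append_assoc, cons_append, nil_append]
        rw [hA, h2]
      obtain ⟨hMeq, hNeq⟩ := first_return_unique pk.2.1 pk'.2.1 hw
      have hB : pk.1.2 = pk'.1.2 := by
        rw [hA] at hMeq
        exact append_cancel_left hMeq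
      have hii : i = i' := by
        have l1 := pk.2.2
        have l2 := pk'.2.2
        apply Fin.ext
        have e1 : pk.1.1.length = pk'.1.1.length := by rw [hA]
        have e2 : pk.1.2.length = pk'.1.2.length := by rw [hB]
        omega
      subst hii
      have hpk : pk = pk' := Subtype.ext (Prod.ext hA hB)
      have hN : N = N' := Subtype.ext hNeq
      rw [hpk, hN]
    -- (2,3)
    · exfalso
      have hfull : (true :: pk.1.1) ++ [true, false] ++ (pk.1.2 ++ false :: N.1)
          = (true :: M'.1 ++ false :: pk'.1.1) ++ [true, false] ++ pk'.1.2 := by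
        rw [h1, h2]
      have hw : (pk.1.1 ++ [true, false] ++ pk.1.2) ++ false :: N.1
          = M'.1 ++ false :: (pk'.1.1 ++ [true, false] ++ pk'.1.2) := by
        simp only [cons_append, append_assoc, List.cons.injEq, true_and, nil_append] at hfull
        simp only [cons_append, append_assoc, nil_append]
        exact hfull
      obtain ⟨hMeq, _⟩ := first_return_unique pk.2.1 M'.2.1 hw
      have hA : pk.1.1 = M'.1 ++ false :: pk'.1.1 := by
        simpa using h1
      have hlen := congrArg List.length hA
      have hlen2 := congrArg List.length hMeq
      simp only [length_append, length_cons] at hlen hlen2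
      omega
    -- (3,1)
    · exact absurd h1 (by simp)
    -- (3,2)
    · exfalso
      have hfull : (true :: M.1 ++ false :: pk.1.1) ++ [true, false] ++ pk.1.2
          = (true :: pk'.1.1) ++ [true, false] ++ (pk'.1.2 ++ false :: N'.1) := by
        rw [h1, h2]
      have hw : (pk'.1.1 ++ [true, false] ++ pk'.1.2) ++ false :: N'.1
          = M.1 ++ false :: (pk.1.1 ++ [true, false] ++ pk.1.2) := by
        simp only [cons_append, append_assoc, List.cons.injEq, true_and, nil_append] at hfull
        simp only [cons_append, append_assoc, nil_append]
        exact hfull.symm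
      obtain ⟨hMeq, _⟩ := first_return_unique pk'.2.1 M.2.1 hw
      have hA : pk'.1.1 = M.1 ++ false :: pk.1.1 := by
        have := h1.symm
        simpa using this
      have hlen := congrArg List.length hA
      have hlen2 := congrArg List.length hMeq
      simp only [length_append, length_cons] at hlen hlen2
      omega
    -- (3,3)
    · have h1' : M.1 ++ false :: pk.1.1 = M'.1 ++ false :: pk'.1.1 := by
        simpa using h1
      obtain ⟨hMeq, hAeq⟩ := first_return_unique M.2.1 M'.2.1 h1'
      have hii : i = i' := by
        have l1 := M.2.2
        have l2 := M'.2.2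
        apply Fin.ext
        have e1 : M.1.length = M'.1.length := by rw [hMeq]
        omega
      subst hii
      have hM : M = M' := Subtype.ext hMeq
      have hpk : pk = pk' := Subtype.ext (Prod.ext hAeq h2)
      rw [hM, hpk]
  · rintro ⟨⟨Astar, Bstar⟩, hd, hl⟩
    dsimp only at hd hl
    have hp : IsDyck (Astar ++ [true, false] ++ Bstar) := hd
    have hpne : Astar ++ [true, false] ++ Bstar ≠ [] := by simp
    obtain ⟨M, N, hM, hN, hfr⟩ := exists_fr hp hpne
    have hMlen := length_even hM
    have hNlen := length_even hN
    have hplen : Astar.length + Bstar.length = 2 * k := by omega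
    have hMN : M.length + N.length = 2 * k := by
      have := congrArg List.length hfr
      simp only [length_append, length_cons, length_nil] at this
      omega
    rcases eq_or_ne Astar [] with rfl | hAne
    · -- marked peak is the first return
      have hB : IsDyck Bstar := by
        have := (isDyck_peak_iff [] Bstar).mp (by simpa using hp)
        simpa using this
      have hBlen : Bstar.length = 2 * k := by simpa using hplen
      refine ⟨Sum.inl ⟨Bstar, hB, by omega⟩, rfl⟩
    · obtain ⟨A, rfl⟩ : ∃ A, Astar = true :: A := by
        obtain ⟨r, hr⟩ := head_true hp hpne
        rcases Astar with _ | ⟨b, A⟩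
        · exact absurd rfl hAne
        · refine ⟨A, ?_⟩
          simp only [cons_append] at hr
          have : b = true := by injection hr
          rw [this]
      have hr : A ++ ([true, false] ++ Bstar) = M ++ false :: N := by
        have := hfr
        simp only [cons_append, append_assoc, List.cons.injEq, true_and, nil_append] at this
        simpa [append_assoc] using this
      rcases append_eq_append_iff.mp hr with ⟨a', ha1, ha2⟩ | ⟨c', hc1, hc2⟩
      · -- M = A ++ a', [true,false] ++ Bstar = a' ++ false :: N : peak inside M
        rcases a' with _ | ⟨x, a2⟩
        · exfalso
          simp only [nil_append] at ha2
          injection ha2 with hx _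
          exact Bool.noConfusion hx
        · simp only [cons_append, List.cons.injEq] at ha2
          obtain ⟨hx, ha3⟩ := ha2
          subst hx
          rcases a2 with _ | ⟨y, B1⟩
          · -- M = A ++ [true] : impossible, M ends with false
            exfalso
            have hMne : M ≠ [] := by
              rw [ha1]; simp
            obtain ⟨r', hr'⟩ := getLast_false hM hMne
            rw [ha1] at hr'
            have := congrArg (fun l => l.getLast?) hr'
            simp only [getLast?_concat] at this
            simp at this
          · simp only [cons_append, List.cons.injEq, nil_append] at ha3
            obtain ⟨hy, hBstar⟩ := ha3
            subst hy
            have hMform : M = A ++ [true, false] ++ B1 := by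
              rw [ha1]; simp
            have hMDyck2 : IsDyck (A ++ [true, false] ++ B1) := by
              rw [← hMform]; exact hM
            have hile : M.count true ≤ k := by omega
            have hB1len : A.length + B1.length + 2 = 2 * M.count true := by
              have := congrArg List.length hMform
              simp only [length_append, length_cons, length_nil] at this
              omega
            refine ⟨Sum.inr ⟨⟨M.count true, by omega⟩, Sum.inl
              (⟨(A, B1), hMDyck2, by dsimp only; omega⟩,
               ⟨N, hN, by dsimp only; omega⟩)⟩, ?_⟩
            apply Subtype.ext
            simp only [recMap, Sum.elim_inr]
            exact Prod.ext rfl (by dsimp only; rw [hBstar])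
      · -- A = M ++ c', false :: N = c' ++ ([true,false] ++ Bstar) : peak inside N
        rcases c' with _ | ⟨x, A2⟩
        · exfalso
          simp only [nil_append, cons_append] at hc2
          injection hc2 with hx _
          exact Bool.noConfusion hx
        · simp only [cons_append, List.cons.injEq] at hc2
          obtain ⟨hx, hc3⟩ := hc2
          subst hx
          have hNform : N = A2 ++ [true, false] ++ Bstar := by
            rw [hc3]; simp
          have hNDyck2 : IsDyck (A2 ++ [true, false] ++ Bstar) := by
            rw [← hNform]; exact hN
          have hile : M.count true ≤ k := by omega
          have hA2len : A2.length + Bstar.length + 2 = 2 * (k - M.count true) := by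
            have := congrArg List.length hNform
            simp only [length_append, length_cons, length_nil] at this
            omega
          refine ⟨Sum.inr ⟨⟨M.count true, by omega⟩, Sum.inr
            (⟨M, hM, by dsimp only; omega⟩,
             ⟨(A2, Bstar), hNDyck2, by dsimp only; omega⟩)⟩, ?_⟩
          apply Subtype.ext
          simp only [recMap, Sum.elim_inr]
          refine Prod.ext (by dsimp only; rw [hc1]; simp) rfl

lemma card_RecT (k : ℕ) :
    Nat.card (RecT k)
      = catalan k + ∑ i ∈ Finset.range (k + 1),
          (Nat.card (PeakT i) * catalan (k - i) + catalan i * Nat.card (PeakT (k - i))) := by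
  letI : ∀ m, Fintype (DWT m) := fun m => Fintype.ofFinite _
  letI : ∀ m, Fintype (PeakT m) := fun m => Fintype.ofFinite _
  show Nat.card (DWT k ⊕ (Σ i : Fin (k + 1), (PeakT i × DWT (k - i)) ⊕ (DWT i × PeakT (k - i)))) = _
  rw [Nat.card_sum]
  congr 1
  · exact card_DWT k
  · rw [Nat.card_eq_fintype_card, Fintype.card_sigma]
    have hterm : ∀ i : Fin (k + 1),
        Fintype.card ((PeakT i × DWT (k - i)) ⊕ (DWT i × PeakT (k - i)))
          = Nat.card (PeakT i) * catalan (k - i) + catalan i * Nat.card (PeakT (k - i)) := by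
      intro i
      rw [← Nat.card_eq_fintype_card, Nat.card_sum, Nat.card_prod, Nat.card_prod,
        card_DWT, card_DWT]
    rw [Finset.sum_congr rfl (fun i _ => hterm i)]
    exact Fin.sum_univ_eq_sum_range
      (fun j => Nat.card (PeakT j) * catalan (k - j) + catalan j * Nat.card (PeakT (k - j))) (k + 1)

lemma card_PeakT_rec (k : ℕ) :
    Nat.card (PeakT (k + 1)) = catalan k + ∑ i ∈ Finset.range (k + 1),
      (Nat.card (PeakT i) * catalan (k - i) + catalan i * Nat.card (PeakT (k - i))) := by
  have h := Nat.card_eq_of_bijective _ (recMap_bij k)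
  rw [← h, card_RecT]

lemma card_PeakT_zero : Nat.card (PeakT 0) = 0 := by
  have : IsEmpty (PeakT 0) := ⟨fun q => by have := q.2.2; omega⟩
  exact Nat.card_of_isEmpty

lemma catalan_conv (n : ℕ) :
    ∑ i ∈ Finset.range (n + 1), catalan i * catalan (n - i) = catalan (n + 1) := by
  rw [catalan_succ]
  exact (Fin.sum_univ_eq_sum_range (fun i => catalan i * catalan (n - i)) (n + 1)).symm

lemma two_card_PeakT : ∀ k, 2 * Nat.card (PeakT k) + (if k = 0 then 1 else 0)
    = (k + 1) * catalan k := by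
  intro k
  induction k using Nat.strong_induction_on with
  | _ k ih =>
    match k with
    | 0 => simp [card_PeakT_zero]
    | (n + 1) =>
      rw [card_PeakT_rec n]
      simp only [Nat.succ_ne_zero, if_false, Nat.add_zero]
      have hsum : ∀ i ∈ Finset.range (n + 1),
          2 * (Nat.card (PeakT i) * catalan (n - i) + catalan i * Nat.card (PeakT (n - i)))
            + ((if i = 0 then 1 else 0) * catalan (n - i)
               + catalan i * (if n - i = 0 then 1 else 0))
          = (n + 2) * (catalan i * catalan (n - i)) := by
        intro i hi
        have hi' : i < n + 1 := Finset.mem_range.mp hi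
        have h1 := ih i (by omega)
        have h2 := ih (n - i) (by omega)
        have e1 : 2 * (Nat.card (PeakT i) * catalan (n - i)
              + catalan i * Nat.card (PeakT (n - i)))
            + ((if i = 0 then 1 else 0) * catalan (n - i)
               + catalan i * (if n - i = 0 then 1 else 0))
            = (2 * Nat.card (PeakT i) + (if i = 0 then 1 else 0)) * catalan (n - i)
              + catalan i * (2 * Nat.card (PeakT (n - i)) + (if n - i = 0 then 1 else 0)) := by
          ring
        rw [e1, h1, h2]
        have e2 : (i + 1) * catalan i * catalan (n - i)
            + catalan i * ((n - i + 1) * catalan (n - i))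
            = ((i + 1) + (n - i + 1)) * (catalan i * catalan (n - i)) := by
          ring
        rw [e2, show (i + 1) + (n - i + 1) = n + 2 by omega]
      have hS := Finset.sum_congr rfl hsum
      rw [Finset.sum_add_distrib, Finset.sum_add_distrib, ← Finset.mul_sum, ← Finset.mul_sum,
        catalan_conv] at hS
      have hδ1 : ∑ i ∈ Finset.range (n + 1), (if i = 0 then 1 else 0) * catalan (n - i)
          = catalan n := by
        simp only [ite_mul, one_mul, zero_mul]
        rw [Finset.sum_ite_eq' (Finset.range (n + 1)) 0 (fun i => catalan (n - i))]
        simp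
      have hδ2 : ∑ i ∈ Finset.range (n + 1), catalan i * (if n - i = 0 then 1 else 0)
          = catalan n := by
        have : ∀ i ∈ Finset.range (n + 1),
            catalan i * (if n - i = 0 then 1 else 0) = (if i = n then catalan i else 0) := by
          intro i hi
          have hi' : i < n + 1 := Finset.mem_range.mp hi
          rcases eq_or_ne i n with rfl | hne
          · simp
          · rw [if_neg hne, if_neg (by omega), mul_zero]
        rw [Finset.sum_congr rfl this,
          Finset.sum_ite_eq' (Finset.range (n + 1)) n (fun i => catalan i)]
        simp
      rw [hδ1, hδ2] at hS
      rw [show n + 1 + 1 = n + 2 from rfl]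
      omega


lemma two_card_SplitT (m : ℕ) :
    2 * Nat.card (SplitT (m + 1)) = (m + 4) * catalan (m + 1) := by
  have hP := two_card_PeakT (m + 1)
  simp only [Nat.succ_ne_zero, if_false, Nat.add_zero] at hP
  have hPV := card_PeakT_eq (m + 1)
  rw [card_HillT] at hPV
  have hS := card_SplitT m
  have key : 2 * Nat.card (SplitT (m + 1)) + 2 * catalan (m + 1)
      = (m + 6) * catalan (m + 1) := by
    have e1 : 2 * Nat.card (SplitT (m + 1)) + 2 * catalan (m + 1)
        = 4 * catalan (m + 1) + 2 * Nat.card (PeakT (m + 1)) := by omega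
    rw [e1, hP]
    ring
  have e2 : (m + 6) * catalan (m + 1) = (m + 4) * catalan (m + 1) + 2 * catalan (m + 1) := by
    ring
  omega

lemma two_card_SPM : ∀ n : ℕ, 2 * Nat.card (SymPeakMarked (2 * (n + 1)))
    = 2 + ∑ i ∈ Finset.Icc 1 n, (i + 3) * catalan i := by
  intro n
  induction n with
  | zero =>
    rw [card_SPM_one]
    simp
  | succ n ih =>
    rw [card_SPM_succ n, Nat.mul_add, ih, two_card_SplitT n,
      Finset.sum_Icc_succ_top (by omega : 1 ≤ n + 1)]
    have : (n + 1 + 3) = n + 4 := by omega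
    rw [this]
    ring

end SymPeaks

/-- The total number of symmetric peaks over all Dyck paths of length 2(n+1)
equals 1 + Σ_{i=1}^{n} ((i+3)/2)·C_i  (stated with both sides doubled to avoid
division). -/
theorem total_symmetric_peaks (n : ℕ) :
    2 * Nat.card (SymPeakMarked (2 * (n + 1)))
      = 2 + ∑ i ∈ Finset.Icc 1 n, (i + 3) * catalan i := by
  exact SymPeaks.two_card_SPM n
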